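/- arXiv:1506.04712 — 3 statements merged into one kernel-verified Lean document; each statement's English description precedes it below -/
import Mathlib

section
/- Let n ≥ 1, let M be a symmetric negative semidefinite real n×n matrix, and fix an index k ∈ {1,…,n}. Define the symmetric (n+1)×(n+1) real matrix M' by: M'_{ij} = M_{ij} for all i,j ≤ n; M'_{i,n+1} = M'_{n+1,i} = 1 if i = k and 0 if i ≤ n, i ≠ k; and M'_{n+1,n+1} = 1. Then M' has exactly one positive eigenvalue, counted with multiplicity. -/
open Matrix
lemma sum_dotProduct' {m : ℕ} {ι : Type*} (s : Finset ι) (f : ι → (Fin m → ℝ)) (w : Fin m → ℝ) :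
    (∑ i ∈ s, f i) ⬝ᵥ w = ∑ i ∈ s, f i ⬝ᵥ w := by
  simp only [dotProduct, Finset.sum_apply, Finset.sum_mul]
  exact Finset.sum_comm

lemma dotProduct_sum' {m : ℕ} {ι : Type*} (s : Finset ι) (w : Fin m → ℝ) (f : ι → (Fin m → ℝ)) :
    w ⬝ᵥ (∑ i ∈ s, f i) = ∑ i ∈ s, w ⬝ᵥ f i := by
  simp only [dotProduct, Finset.sum_apply, Finset.mul_sum]
  exact Finset.sum_comm

open Matrix in
lemma quad_eq_aux {m : ℕ} {A : Matrix (Fin m) (Fin m) ℝ} (hA : A.IsHermitian) (x : Fin m → ℝ) :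
    x ⬝ᵥ A.mulVec x
      = ∑ j, hA.eigenvalues j * ((hA.eigenvectorBasis j : Fin m → ℝ) ⬝ᵥ x) ^ 2 := by
  classical
  set B := hA.eigenvectorBasis with hB
  set v : Fin m → (Fin m → ℝ) := fun j => (B j : Fin m → ℝ) with hv
  set c : Fin m → ℝ := fun j => v j ⬝ᵥ x with hc
  have horth : ∀ i j, v i ⬝ᵥ v j = if i = j then 1 else 0 := by
    intro i j
    have := orthonormal_iff_ite.mp B.orthonormal i j
    simpa [PiLp.inner_apply, dotProduct, mul_comm] using this
  have hcoef : ∀ j, (inner ℝ (B j) (WithLp.toLp 2 x : EuclideanSpace ℝ (Fin m)) : ℝ) = c j := by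
    intro j
    simp [hc, hv, dotProduct, PiLp.inner_apply, mul_comm]
  have hrepr : x = ∑ j, c j • v j := by
    have h := B.sum_repr' (WithLp.toLp 2 x : EuclideanSpace ℝ (Fin m))
    simp only [hcoef] at h
    have h2 := congrArg WithLp.ofLp h
    simpa [hv] using h2.symm
  have hmve : ∀ j, A.mulVec (v j) = hA.eigenvalues j • v j := fun j =>
    hA.mulVec_eigenvectorBasis j
  have hmv : A.mulVec x = ∑ j, (c j * hA.eigenvalues j) • v j := by
    conv_lhs => rw [hrepr]
    rw [← Matrix.mulVecLin_apply, map_sum]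
    refine Finset.sum_congr rfl fun j _ => ?_
    rw [_root_.map_smul, Matrix.mulVecLin_apply, hmve j, smul_smul, mul_comm]
  rw [hmv]
  conv_lhs => rw [hrepr]
  rw [sum_dotProduct']
  refine Finset.sum_congr rfl fun j _ => ?_
  rw [smul_dotProduct, dotProduct_sum']
  simp only [dotProduct_smul, horth, smul_eq_mul, mul_ite, mul_one, mul_zero]
  rw [Finset.sum_ite_eq Finset.univ j (fun i => c i * hA.eigenvalues i)]
  simp only [Finset.mem_univ, if_true]
  ring

open Matrix in
lemma eig_orth {m : ℕ} {A : Matrix (Fin m) (Fin m) ℝ} (hA : A.IsHermitian) (i j : Fin m) :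
    (hA.eigenvectorBasis i : Fin m → ℝ) ⬝ᵥ (hA.eigenvectorBasis j : Fin m → ℝ)
      = if i = j then 1 else 0 := by
  have := orthonormal_iff_ite.mp hA.eigenvectorBasis.orthonormal i j
  simpa [PiLp.inner_apply, dotProduct, mul_comm] using this


/-- Attaching a new simplex at a vertex with negative semidefinite local
intersection matrix: if `M` is an `n × n` symmetric negative semidefinite real
matrix (`n ≥ 1`) and `M'` is the `(n+1) × (n+1)` symmetric matrix obtained from
`M` by adding a last row/column which is `1` in position `k` and `0` elsewhere,
with diagonal entry `1`, then `M'` has exactly one positive eigenvalue. -/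
theorem stmt_0 (n : ℕ) (hn : 1 ≤ n) (M : Matrix (Fin n) (Fin n) ℝ)
    (hM : M.IsHermitian)
    (hsemi : ∀ x : Fin n → ℝ, dotProduct x (M.mulVec x) ≤ 0)
    (k : Fin n)
    (M' : Matrix (Fin (n + 1)) (Fin (n + 1)) ℝ)
    (hM'def : ∀ i j : Fin (n + 1),
      M' i j =
        if hi : (i : ℕ) < n then
          if hj : (j : ℕ) < n then M ⟨i, hi⟩ ⟨j, hj⟩
          else if (i : ℕ) = (k : ℕ) then 1 else 0
        else
          if (j : ℕ) < n then (if (j : ℕ) = (k : ℕ) then 1 else 0)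
          else 1)
    (hM' : M'.IsHermitian) :
    (Finset.univ.filter fun i => 0 < hM'.eigenvalues i).card = 1 := by
  classical
  set lst : Fin (n+1) := Fin.last n with hlst
  -- the quadratic form of M' is ≤ 0 on vectors vanishing at the last coordinate
  have key : ∀ x : Fin (n+1) → ℝ, x lst = 0 → x ⬝ᵥ M'.mulVec x ≤ 0 := by
    intro x hx
    set y : Fin n → ℝ := fun i => x i.castSucc with hy
    have hrow : ∀ i : Fin n, (M'.mulVec x) i.castSucc = (M.mulVec y) i := by
      intro i
      show (∑ j, M' i.castSucc j * x j) = ∑ j, M i j * y j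
      rw [Fin.sum_univ_castSucc]
      have h1 : M' i.castSucc (Fin.last n) * x (Fin.last n) = 0 := by
        rw [hx]; ring
      rw [h1, add_zero]
      refine Finset.sum_congr rfl fun j _ => ?_
      congr 1
      rw [hM'def]
      have hi : ((i.castSucc : Fin (n+1)) : ℕ) < n := by simp
      have hj : ((j.castSucc : Fin (n+1)) : ℕ) < n := by simp
      rw [dif_pos hi, dif_pos hj]
      congr 1 <;> ext <;> simp
    have : x ⬝ᵥ M'.mulVec x = y ⬝ᵥ M.mulVec y := by
      show (∑ i, x i * (M'.mulVec x) i) = ∑ i, y i * (M.mulVec y) i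
      rw [Fin.sum_univ_castSucc, hx, zero_mul, add_zero]
      exact Finset.sum_congr rfl fun i _ => by rw [hrow i]
    rw [this]
    exact hsemi y
  -- the quadratic form is 1 at the last standard basis vector
  have hQe : (Pi.single lst 1 : Fin (n+1) → ℝ) ⬝ᵥ
      M'.mulVec (Pi.single lst 1) = 1 := by
    have h1 : M'.mulVec (Pi.single lst (1:ℝ)) = fun i => M' i lst := by
      funext i
      show (∑ j, M' i j * (Pi.single lst 1 : Fin (n+1) → ℝ) j) = M' i lst
      rw [Finset.sum_eq_single lst]
      · simp
      · intro b _ hb; simp [Pi.single_eq_of_ne hb]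
      · simp
    rw [h1]
    show (∑ i, (Pi.single lst 1 : Fin (n+1) → ℝ) i * M' i lst) = 1
    rw [Finset.sum_eq_single lst]
    · have : M' lst lst = 1 := by
        rw [hM'def]
        have : ¬ ((lst : ℕ) < n) := by simp [hlst]
        rw [dif_neg this, if_neg this]
      simp [this]
    · intro b _ hb; simp [Pi.single_eq_of_ne hb]
    · simp
  -- existence of a positive eigenvalue
  have hex : ∃ i, 0 < hM'.eigenvalues i := by
    by_contra h
    push_neg at h
    have hq := quad_eq_aux hM' (Pi.single lst 1)
    rw [hQe] at hq
    have hle : (0:ℝ) ≥ 1 := by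
      rw [hq]
      apply Finset.sum_nonpos
      intro j _
      exact mul_nonpos_iff.mpr (Or.inr ⟨h j, sq_nonneg _⟩)
    linarith
  -- uniqueness of the positive eigenvalue
  have huniq : ∀ i j, 0 < hM'.eigenvalues i → 0 < hM'.eigenvalues j → i = j := by
    intro i j hi hj
    by_contra hij
    set v : Fin (n+1) → ℝ := (hM'.eigenvectorBasis i : Fin (n+1) → ℝ) with hvdef
    set w : Fin (n+1) → ℝ := (hM'.eigenvectorBasis j : Fin (n+1) → ℝ) with hwdef
    have hmv_v : M'.mulVec v = hM'.eigenvalues i • v := hM'.mulVec_eigenvectorBasis i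
    have hmv_w : M'.mulVec w = hM'.eigenvalues j • w := hM'.mulVec_eigenvectorBasis j
    have hvv : v ⬝ᵥ v = 1 := by have := eig_orth hM' i i; simpa using this
    have hww : w ⬝ᵥ w = 1 := by have := eig_orth hM' j j; simpa using this
    have hvw : v ⬝ᵥ w = 0 := by have := eig_orth hM' i j; simpa [hij] using this
    have hwv : w ⬝ᵥ v = 0 := by
      have := eig_orth hM' j i; simpa [Ne.symm hij] using this
    by_cases hv0 : v lst = 0
    · have := key v hv0
      rw [hmv_v, dotProduct_smul, hvv] at this
      simp at this
      linarith
    · set x : Fin (n+1) → ℝ := (w lst) • v - (v lst) • w with hxdef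
      have hx0 : x lst = 0 := by simp [hxdef]; ring
      have hQx : x ⬝ᵥ M'.mulVec x
          = (w lst)^2 * hM'.eigenvalues i + (v lst)^2 * hM'.eigenvalues j := by
        rw [hxdef]
        rw [Matrix.mulVec_sub, Matrix.mulVec_smul, Matrix.mulVec_smul, hmv_v, hmv_w]
        simp only [sub_dotProduct, dotProduct_sub, smul_dotProduct,
          dotProduct_smul, hvv, hww, hvw, hwv, smul_eq_mul]
        ring
      have := key x hx0
      rw [hQx] at this
      nlinarith [sq_nonneg (w lst), sq_nonneg (v lst), sq_abs (v lst),
        pow_pos (abs_pos.mpr hv0) 2]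
  obtain ⟨i0, hi0⟩ := hex
  rw [Finset.card_eq_one]
  refine ⟨i0, ?_⟩
  ext j
  simp only [Finset.mem_filter, Finset.mem_univ, true_and, Finset.mem_singleton]
  exact ⟨fun h => huniq j i0 h hi0, fun h => h ▸ hi0⟩
end

section
/- Let n ≥ 1, let M be a symmetric real n×n matrix, and fix an index k ∈ {1,…,n}. Define the symmetric (n+1)×(n+1) real matrix M' by: M'_{ij} = M_{ij} for all i,j ≤ n with (i,j) ≠ (k,k); M'_{kk} = M_{kk} − 1; M'_{i,n+1} = M'_{n+1,i} = 1 if i = k and 0 if i ≤ n, i ≠ k; and M'_{n+1,n+1} = −1. Then M' has the same number of positive eigenvalues, counted with multiplicity, as M. -/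
open Matrix RealInnerProductSpace Module Finset

variable {m : ℕ}

noncomputable def qd (A : Matrix (Fin m) (Fin m) ℝ) (x : EuclideanSpace ℝ (Fin m)) : ℝ :=
  ⟪x, Matrix.toEuclideanLin A x⟫

lemma qd_eq_sum {A : Matrix (Fin m) (Fin m) ℝ} (hA : A.IsHermitian)
    (x : EuclideanSpace ℝ (Fin m)) :
    qd A x = ∑ i, hA.eigenvalues i * (hA.eigenvectorBasis.repr x i)^2 := by
  set b := hA.eigenvectorBasis with hb
  have hT : ∀ i, Matrix.toEuclideanLin A (b i) = hA.eigenvalues i • b i := by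
    intro i
    have := hA.mulVec_eigenvectorBasis i
    apply (WithLp.equiv 2 (Fin m → ℝ)).injective
    simpa [Matrix.piLp_ofLp_toEuclideanLin, Matrix.toLin'_apply] using this
  have hx : ∑ i, b.repr x i • b i = x := b.sum_repr x
  calc qd A x = ⟪x, Matrix.toEuclideanLin A (∑ i, b.repr x i • b i)⟫ := by rw [qd, hx]
    _ = ∑ i, hA.eigenvalues i * (b.repr x i)^2 := by
        rw [map_sum, inner_sum]
        refine Finset.sum_congr rfl fun i _ => ?_
        rw [_root_.map_smul, hT i, smul_smul, real_inner_smul_right, real_inner_comm,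
          ← b.repr_apply_apply]
        ring

lemma repr_zero (b : OrthonormalBasis (Fin m) ℝ (EuclideanSpace ℝ (Fin m)))
    (S : Finset (Fin m)) {x : EuclideanSpace ℝ (Fin m)}
    (hx : x ∈ Submodule.span ℝ (b '' S)) {i : Fin m} (hi : i ∉ S) :
    b.repr x i = 0 := by
  rw [b.repr_apply_apply]
  induction hx using Submodule.span_induction with
  | mem y hy =>
      obtain ⟨j, hj, rfl⟩ := hy
      exact b.orthonormal.2 (fun h => hi (h ▸ hj))
  | zero => simp
  | add y z _ _ hy hz => rw [inner_add_right, hy, hz, add_zero]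
  | smul c y _ hy => rw [inner_smul_right, hy, mul_zero]

lemma finrank_span_image (b : OrthonormalBasis (Fin m) ℝ (EuclideanSpace ℝ (Fin m)))
    (S : Finset (Fin m)) :
    finrank ℝ (Submodule.span ℝ (b '' S) : Submodule ℝ (EuclideanSpace ℝ (Fin m))) = S.card := by
  have hli : LinearIndependent ℝ (fun s : S => b s) :=
    b.toBasis.linearIndependent.comp Subtype.val Subtype.val_injective
  have himg : Set.range (fun s : S => b s) = b '' S := by
    ext y; simp [Set.mem_image]
  rw [← himg, finrank_span_eq_card hli, Fintype.card_coe]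

lemma exists_pos_subspace {A : Matrix (Fin m) (Fin m) ℝ} (hA : A.IsHermitian) :
    ∃ W : Submodule ℝ (EuclideanSpace ℝ (Fin m)),
      finrank ℝ W = (Finset.univ.filter fun i => 0 < hA.eigenvalues i).card ∧
      ∀ x ∈ W, x ≠ 0 → 0 < qd A x := by
  classical
  set b := hA.eigenvectorBasis with hb
  set pos : Finset (Fin m) := Finset.univ.filter fun i => 0 < hA.eigenvalues i with hpos
  refine ⟨Submodule.span ℝ (b '' pos), finrank_span_image b pos, ?_⟩
  intro x hx hx0
  rw [qd_eq_sum hA]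
  have hvanish : ∀ i, i ∉ pos → b.repr x i = 0 := fun i hi => repr_zero b pos hx hi
  have hne : ∃ i, b.repr x i ≠ 0 := by
    by_contra h
    push_neg at h
    apply hx0
    have : b.repr x = 0 := by ext i; simpa using h i
    simpa using b.repr.injective (by simpa using this)
  obtain ⟨i, hi⟩ := hne
  have hipos : i ∈ pos := by
    by_contra hcon; exact hi (hvanish i hcon)
  refine Finset.sum_pos' (fun j _ => ?_) ⟨i, Finset.mem_univ i, ?_⟩
  · by_cases hj : j ∈ pos
    · have : 0 < hA.eigenvalues j := by simpa [hpos] using hj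
      positivity
    · rw [hvanish j hj]; simp
  · have h1 : 0 < hA.eigenvalues i := by simpa [hpos] using hipos
    have h2 : 0 < (b.repr x i)^2 := by positivity
    positivity

lemma pos_subspace_le {A : Matrix (Fin m) (Fin m) ℝ} (hA : A.IsHermitian)
    (W : Submodule ℝ (EuclideanSpace ℝ (Fin m)))
    (hW : ∀ x ∈ W, x ≠ 0 → 0 < qd A x) :
    finrank ℝ W ≤ (Finset.univ.filter fun i => 0 < hA.eigenvalues i).card := by
  classical
  set b := hA.eigenvectorBasis with hb
  set pos : Finset (Fin m) := Finset.univ.filter fun i => 0 < hA.eigenvalues i with hpos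
  set neg : Finset (Fin m) := Finset.univ.filter fun i => ¬ 0 < hA.eigenvalues i with hneg
  by_contra hcon
  push_neg at hcon
  set U : Submodule ℝ (EuclideanSpace ℝ (Fin m)) := Submodule.span ℝ (b '' neg) with hU
  have hUrank : finrank ℝ U = neg.card := finrank_span_image b neg
  have hcards : pos.card + neg.card = m := by
    rw [hpos, hneg, Finset.card_filter_add_card_filter_not]
    simp
  have hE : finrank ℝ (EuclideanSpace ℝ (Fin m)) = m := by
    simp [finrank_euclideanSpace]
  have hsup : finrank ℝ (W ⊔ U : Submodule ℝ (EuclideanSpace ℝ (Fin m))) ≤ m := by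
    calc finrank ℝ (W ⊔ U : Submodule ℝ (EuclideanSpace ℝ (Fin m))) ≤
        finrank ℝ (EuclideanSpace ℝ (Fin m)) := Submodule.finrank_le _
      _ = m := hE
  have heq := Submodule.finrank_sup_add_finrank_inf_eq W U
  have hinf : 0 < finrank ℝ (W ⊓ U : Submodule ℝ (EuclideanSpace ℝ (Fin m))) := by omega
  have hne : (W ⊓ U : Submodule ℝ (EuclideanSpace ℝ (Fin m))) ≠ ⊥ := by
    intro h0
    rw [h0, finrank_bot] at hinf
    omega
  obtain ⟨x, hxmem, hx0⟩ := Submodule.exists_mem_ne_zero_of_ne_bot hne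
  have hxW : x ∈ W := hxmem.1
  have hxU : x ∈ U := hxmem.2
  have hposq : 0 < qd A x := hW x hxW hx0
  have hnonpos : qd A x ≤ 0 := by
    rw [qd_eq_sum hA]
    refine Finset.sum_nonpos fun i _ => ?_
    by_cases hi : i ∈ neg
    · have h1 : hA.eigenvalues i ≤ 0 := by
        have := Finset.mem_filter.1 (hneg ▸ hi)
        linarith [not_lt.1 this.2]
      have h2 : (0:ℝ) ≤ (b.repr x i)^2 := sq_nonneg _
      exact mul_nonpos_of_nonpos_of_nonneg h1 h2
    · rw [repr_zero b neg hxU hi]; simp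
  linarith

lemma count_le {a b : ℕ} {A : Matrix (Fin a) (Fin a) ℝ} {B : Matrix (Fin b) (Fin b) ℝ}
    (hA : A.IsHermitian) (hB : B.IsHermitian)
    (f : EuclideanSpace ℝ (Fin b) →ₗ[ℝ] EuclideanSpace ℝ (Fin a))
    (hf : ∀ y : EuclideanSpace ℝ (Fin b), y ≠ 0 → 0 < qd B y → f y ≠ 0 ∧ 0 < qd A (f y)) :
    (Finset.univ.filter fun i => 0 < hB.eigenvalues i).card ≤
      (Finset.univ.filter fun i => 0 < hA.eigenvalues i).card := by
  obtain ⟨W, hWrank, hWpos⟩ := exists_pos_subspace hB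
  have hker : ∀ y ∈ W, f y = 0 → y = 0 := by
    intro y hy hfy
    by_contra h0
    exact (hf y h0 (hWpos y hy h0)).1 hfy
  have hrank : finrank ℝ (W.map f) = finrank ℝ W := by
    have h1 := LinearMap.finrank_range_add_finrank_ker (f.domRestrict W)
    have h2 : LinearMap.ker (f.domRestrict W) = ⊥ := by
      rw [LinearMap.ker_eq_bot']
      intro v hv
      exact Subtype.ext (hker v v.2 (by simpa using hv))
    rw [h2, finrank_bot, add_zero] at h1
    rw [← h1, ← LinearMap.range_domRestrict]
  rw [← hWrank, ← hrank]
  refine pos_subspace_le hA (W.map f) ?_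
  rintro x hx hx0
  obtain ⟨y, hy, rfl⟩ := Submodule.mem_map.1 hx
  have hy0 : y ≠ 0 := by rintro rfl; simp at hx0
  exact (hf y hy0 (hWpos y hy hy0)).2

lemma qd_apply (A : Matrix (Fin m) (Fin m) ℝ) (x : EuclideanSpace ℝ (Fin m)) :
    qd A x = ∑ i, x i * ∑ j, A i j * x j := by
  simp [qd, PiLp.inner_apply, Matrix.toEuclideanLin_apply, Matrix.mulVec, dotProduct,
    WithLp.equiv_symm_apply, PiLp.toLp_apply, RCLike.inner_apply, mul_comm]

noncomputable def gmap (n : ℕ) : EuclideanSpace ℝ (Fin (n+1)) →ₗ[ℝ] EuclideanSpace ℝ (Fin n) where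
  toFun y := (WithLp.equiv 2 (Fin n → ℝ)).symm (fun i => y (Fin.castSucc i))
  map_add' y z := by
    ext i
    simp [WithLp.equiv_symm_apply, PiLp.toLp_apply]
  map_smul' c y := by
    ext i
    simp [WithLp.equiv_symm_apply, PiLp.toLp_apply]

lemma gmap_apply (n : ℕ) (y : EuclideanSpace ℝ (Fin (n+1))) (i : Fin n) :
    gmap n y i = y (Fin.castSucc i) := by
  simp [gmap, WithLp.equiv_symm_apply, PiLp.toLp_apply]

noncomputable def fmap (n : ℕ) (k : Fin n) :
    EuclideanSpace ℝ (Fin n) →ₗ[ℝ] EuclideanSpace ℝ (Fin (n+1)) where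
  toFun x := (WithLp.equiv 2 (Fin (n+1) → ℝ)).symm
    (fun i => if h : (i : ℕ) < n then x ⟨i, h⟩ else x k)
  map_add' x z := by
    ext i
    by_cases h : (i : ℕ) < n <;> simp [WithLp.equiv_symm_apply, PiLp.toLp_apply, h]
  map_smul' c x := by
    ext i
    by_cases h : (i : ℕ) < n <;> simp [WithLp.equiv_symm_apply, PiLp.toLp_apply, h]

lemma fmap_apply (n : ℕ) (k : Fin n) (x : EuclideanSpace ℝ (Fin n)) (i : Fin (n+1)) :
    fmap n k x i = if h : (i : ℕ) < n then x ⟨i, h⟩ else x k := by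
  simp [fmap, WithLp.equiv_symm_apply, PiLp.toLp_apply]

lemma gmap_fmap (n : ℕ) (k : Fin n) (x : EuclideanSpace ℝ (Fin n)) :
    gmap n (fmap n k x) = x := by
  ext i
  rw [gmap_apply, fmap_apply]
  simp [Fin.castSucc, i.isLt]

/-- Attaching a new simplex onto an edge: if `M` is an `n × n` symmetric real
matrix (`n ≥ 1`) and `M'` is the `(n+1) × (n+1)` symmetric matrix obtained from
`M` by decreasing the `(k,k)` entry by `1` and adding a last row/column which is
`1` in position `k` and `0` elsewhere, with diagonal entry `-1`, then `M'` has
the same number of positive eigenvalues (with multiplicity) as `M`. -/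
theorem stmt_1 (n : ℕ) (hn : 1 ≤ n) (M : Matrix (Fin n) (Fin n) ℝ)
    (hM : M.IsHermitian)
    (k : Fin n)
    (M' : Matrix (Fin (n + 1)) (Fin (n + 1)) ℝ)
    (hM'def : ∀ i j : Fin (n + 1),
      M' i j =
        if hi : (i : ℕ) < n then
          if hj : (j : ℕ) < n then
            (if (i : ℕ) = (k : ℕ) ∧ (j : ℕ) = (k : ℕ) then M k k - 1
             else M ⟨i, hi⟩ ⟨j, hj⟩)
          else if (i : ℕ) = (k : ℕ) then 1 else 0
        else
          if (j : ℕ) < n then (if (j : ℕ) = (k : ℕ) then 1 else 0)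
          else -1)
    (hM' : M'.IsHermitian) :
    (Finset.univ.filter fun i => 0 < hM'.eigenvalues i).card =
      (Finset.univ.filter fun i => 0 < hM.eigenvalues i).card := by
  classical
  -- entry computations
  have hcc : ∀ i j : Fin n, M' i.castSucc j.castSucc
      = M i j - (if i = k then (1:ℝ) else 0) * (if j = k then 1 else 0) := by
    intro i j
    rw [hM'def]
    have hi : ((i.castSucc : Fin (n+1)) : ℕ) < n := by simp
    have hj : ((j.castSucc : Fin (n+1)) : ℕ) < n := by simp
    rw [dif_pos hi, dif_pos hj]
    by_cases h1 : i = k <;> by_cases h2 : j = k <;>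
      simp [h1, h2, Fin.val_eq_val, Fin.eta]
  have hcr : ∀ i : Fin n, M' i.castSucc (Fin.last n) = if i = k then 1 else 0 := by
    intro i
    rw [hM'def]
    have hi : ((i.castSucc : Fin (n+1)) : ℕ) < n := by simp
    rw [dif_pos hi, dif_neg (by simp)]
    by_cases h1 : i = k <;> simp [h1, Fin.val_eq_val]
  have hrc : ∀ j : Fin n, M' (Fin.last n) j.castSucc = if j = k then 1 else 0 := by
    intro j
    rw [hM'def]
    rw [dif_neg (by simp)]
    have hj : ((j.castSucc : Fin (n+1)) : ℕ) < n := by simp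
    rw [if_pos hj]
    by_cases h1 : j = k <;> simp [h1, Fin.val_eq_val]
  have hdd : M' (Fin.last n) (Fin.last n) = -1 := by
    rw [hM'def, dif_neg (by simp), if_neg (by simp)]
  -- key identity
  have key : ∀ y : EuclideanSpace ℝ (Fin (n+1)),
      qd M' y = qd M (gmap n y) - (y (Fin.last n) - y (Fin.castSucc k))^2 := by
    intro y
    have inner2 : ∑ j : Fin (n+1), M' (Fin.last n) j * y j
        = y (Fin.castSucc k) - y (Fin.last n) := by
      rw [Fin.sum_univ_castSucc]
      simp only [hrc, hdd, ite_mul, one_mul, zero_mul]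
      rw [Finset.sum_ite_eq' Finset.univ k (fun j => y (Fin.castSucc j))]
      simp
      ring
    have inner1 : ∀ i : Fin n, (∑ j : Fin (n+1), M' i.castSucc j * y j)
        = (∑ j, M i j * y (Fin.castSucc j))
          + (if i = k then y (Fin.last n) - y (Fin.castSucc k) else 0) := by
      intro i
      rw [Fin.sum_univ_castSucc]
      by_cases h : i = k
      · simp only [hcc, hcr, if_pos h, one_mul, sub_mul, ite_mul, zero_mul,
          Finset.sum_sub_distrib]
        rw [Finset.sum_ite_eq' Finset.univ k (fun j => y (Fin.castSucc j))]
        simp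
        ring
      · simp only [hcc, hcr, if_neg h, zero_mul, sub_zero, mul_zero, add_zero]
    rw [qd_apply, qd_apply]
    simp only [gmap_apply]
    rw [Fin.sum_univ_castSucc]
    rw [inner2]
    rw [Finset.sum_congr rfl fun i _ => by rw [inner1 i]]
    simp only [mul_add, mul_ite, mul_zero, Finset.sum_add_distrib]
    rw [Finset.sum_ite_eq' Finset.univ k
      (fun i => y (Fin.castSucc i) * (y (Fin.last n) - y (Fin.castSucc k)))]
    simp only [Finset.mem_univ, if_true]
    ring
  refine le_antisymm ?_ ?_
  · -- card M' ≤ card M via gmap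
    refine count_le hM hM' (gmap n) ?_
    intro y hy0 hqy
    have hkey := key y
    constructor
    · intro h0
      rw [h0] at hkey
      have : qd M (0 : EuclideanSpace ℝ (Fin n)) = 0 := by simp [qd]
      rw [this] at hkey
      nlinarith [sq_nonneg (y (Fin.last n) - y (Fin.castSucc k))]
    · nlinarith [sq_nonneg (y (Fin.last n) - y (Fin.castSucc k))]
  · -- card M ≤ card M' via fmap
    refine count_le hM' hM (fmap n k) ?_
    intro x hx0 hqx
    have hgf := gmap_fmap n k x
    have hkey := key (fmap n k x)
    have h1 : fmap n k x (Fin.last n) = x k := by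
      rw [fmap_apply]
      simp
    have h2 : fmap n k x (Fin.castSucc k) = x k := by
      rw [fmap_apply]
      simp [Fin.eta, k.isLt]
    rw [hgf, h1, h2, sub_self] at hkey
    constructor
    · intro h0
      rw [h0] at hgf
      simp at hgf
      exact hx0 hgf.symm
    · rw [hkey]
      simpa using hqx
end

section
/- Let m be an integer with 3 ≤ m ≤ 6 and let C_m be the m×m real symmetric matrix with (i,j)-entry equal to −1 if i = j, equal to 1 if j ≡ i+1 or j ≡ i−1 (mod m), and 0 otherwise. Then C_m has exactly one positive eigenvalue, counted with multiplicity. -/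
open Matrix

set_option maxHeartbeats 1000000 in
/-- The quadratic form of `C_m` is nonpositive on the hyperplane where coordinates sum to 0,
provided `3 ≤ m ≤ 6`. -/
theorem stmt4_quad_nonpos (m : ℕ) (hm : 3 ≤ m) (hm' : m ≤ 6)
    (C : Matrix (Fin m) (Fin m) ℝ)
    (hC : ∀ i j : Fin m,
      C i j =
        if i = j then -1
        else if (j : ℕ) = ((i : ℕ) + 1) % m ∨ (i : ℕ) = ((j : ℕ) + 1) % m then 1
        else 0)
    (x : Fin m → ℝ) (hx : ∑ k, x k = 0) :
    dotProduct x (C *ᵥ x) ≤ 0 := by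
  have hform : dotProduct x (C *ᵥ x) = ∑ i, ∑ j, x i * (C i j * x j) := by
    simp [dotProduct, Matrix.mulVec, Finset.mul_sum]
  interval_cases m
  · rw [hform]
    simp (config := { decide := true }) only [hC, Fin.sum_univ_three]
    norm_num [Fin.sum_univ_three] at hx ⊢
    nlinarith [sq_nonneg (x 0), sq_nonneg (x 1), sq_nonneg (x 2), sq_nonneg (x 0 + x 1 + x 2)]
  · rw [hform]
    simp (config := { decide := true }) only [hC, Fin.sum_univ_four]
    norm_num [Fin.sum_univ_four] at hx ⊢
    nlinarith [sq_nonneg (x 0), sq_nonneg (x 1), sq_nonneg (x 2), sq_nonneg (x 3),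
      sq_nonneg (x 0 + x 2), sq_nonneg (x 1 + x 3)]
  · rw [hform]
    simp (config := { decide := true }) only [hC, Fin.sum_univ_five]
    norm_num [Fin.sum_univ_five] at hx ⊢
    nlinarith [sq_nonneg (6*x 0 - 4*x 1 + x 2 + x 3 - 4*x 4),
      sq_nonneg (2*x 1 - 2*x 2 + x 3 - x 4), sq_nonneg (x 2 - x 3), sq_nonneg (x 3 - x 4),
      sq_nonneg (x 0 + x 1 + x 2 + x 3 + x 4)]
  · rw [hform]
    simp (config := { decide := true }) only [hC, Fin.sum_univ_six]
    norm_num [Fin.sum_univ_six] at hx ⊢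
    nlinarith [sq_nonneg (7*x 0 - 5*x 1 + x 2 + x 3 + x 4 - 5*x 5),
      sq_nonneg (4*x 1 - 5*x 2 + 2*x 3 + 2*x 4 - 3*x 5),
      sq_nonneg (x 2 - 2*x 3 + 2*x 4 - x 5),
      sq_nonneg (x 0 + x 1 + x 2 + x 3 + x 4 + x 5)]

set_option maxHeartbeats 1000000 in
/-- The quadratic form of `C_m` is positive on the all-ones vector. -/
theorem stmt4_ones_pos (m : ℕ) (hm : 3 ≤ m) (hm' : m ≤ 6)
    (C : Matrix (Fin m) (Fin m) ℝ)
    (hC : ∀ i j : Fin m,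
      C i j =
        if i = j then -1
        else if (j : ℕ) = ((i : ℕ) + 1) % m ∨ (i : ℕ) = ((j : ℕ) + 1) % m then 1
        else 0) :
    0 < dotProduct (fun _ => (1:ℝ)) (C *ᵥ (fun _ => 1)) := by
  have hform : dotProduct (fun _ => (1:ℝ)) (C *ᵥ (fun _ => 1))
      = ∑ i, ∑ j, C i j := by
    simp [dotProduct, Matrix.mulVec]
  interval_cases m
  · rw [hform]
    simp (config := { decide := true }) only [hC, Fin.sum_univ_three]
    norm_num
  · rw [hform]
    simp (config := { decide := true }) only [hC, Fin.sum_univ_four]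
    norm_num
  · rw [hform]
    simp (config := { decide := true }) only [hC, Fin.sum_univ_five]
    norm_num
  · rw [hform]
    simp (config := { decide := true }) only [hC, Fin.sum_univ_six]
    norm_num

/-- For `3 ≤ m ≤ 6`, the cyclic matrix `C_m` with `-1` on the diagonal and `1`
in the positions cyclically adjacent mod `m` has exactly one positive
eigenvalue (with multiplicity). -/
theorem stmt_4 (m : ℕ) (hm : 3 ≤ m) (hm' : m ≤ 6)
    (C : Matrix (Fin m) (Fin m) ℝ)
    (hC : ∀ i j : Fin m,
      C i j =
        if i = j then -1
        else if (j : ℕ) = ((i : ℕ) + 1) % m ∨ (i : ℕ) = ((j : ℕ) + 1) % m then 1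
        else 0)
    (hHerm : C.IsHermitian) :
    (Finset.univ.filter fun i => 0 < hHerm.eigenvalues i).card = 1 := by
  classical
  set U : Matrix (Fin m) (Fin m) ℝ := (hHerm.eigenvectorUnitary : Matrix (Fin m) (Fin m) ℝ)
    with hUdef
  have hUU' : U * star U = 1 := Unitary.coe_mul_star_self hHerm.eigenvectorUnitary
  have hstar : star U = Uᵀ := by ext i j; simp [Matrix.star_apply]
  have hdiag : star U * C * U = Matrix.diagonal hHerm.eigenvalues := by
    have h := hHerm.conjStarAlgAut_star_eigenvectorUnitary
    simpa [Function.comp, RCLike.ofReal_real_eq_id, Unitary.conjStarAlgAut_apply] using h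
  have hquad : ∀ c : Fin m → ℝ,
      dotProduct (U *ᵥ c) (C *ᵥ (U *ᵥ c)) = ∑ i, hHerm.eigenvalues i * (c i)^2 := by
    intro c
    rw [Matrix.mulVec_mulVec, ← Matrix.vecMul_transpose, dotProduct_mulVec,
      Matrix.vecMul_vecMul, ← hstar, ← Matrix.mul_assoc, hdiag]
    simp only [dotProduct, Matrix.vecMul_diagonal]
    exact Finset.sum_congr rfl fun i _ => by ring
  have hsum : ∀ c : Fin m → ℝ, (∑ k, (U *ᵥ c) k) = ∑ i, c i * (∑ k, U k i) := by
    intro c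
    simp only [Matrix.mulVec, dotProduct]
    rw [Finset.sum_comm]
    exact Finset.sum_congr rfl fun i _ => by
      rw [Finset.mul_sum]; exact Finset.sum_congr rfl fun k _ => mul_comm _ _
  -- existence of a positive eigenvalue
  have hex : ∃ i, 0 < hHerm.eigenvalues i := by
    by_contra h
    push_neg at h
    set c : Fin m → ℝ := star U *ᵥ (fun _ => 1) with hcdef
    have hc : U *ᵥ c = fun _ => 1 := by
      rw [hcdef, Matrix.mulVec_mulVec, hUU', Matrix.one_mulVec]
    have h1 : dotProduct (fun _ => (1:ℝ)) (C *ᵥ (fun _ => 1))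
        = ∑ i, hHerm.eigenvalues i * (c i)^2 := by rw [← hc, hquad]
    have h2 : (∑ i, hHerm.eigenvalues i * (c i)^2) ≤ 0 :=
      Finset.sum_nonpos fun i _ => mul_nonpos_of_nonpos_of_nonneg (h i) (sq_nonneg _)
    have := stmt4_ones_pos m hm hm' C hC
    linarith [h1 ▸ this]
  -- uniqueness
  have huniq : ∀ i j : Fin m, 0 < hHerm.eigenvalues i → 0 < hHerm.eigenvalues j → i = j := by
    intro i j hi hj
    by_contra hij
    set s : Fin m → ℝ := fun t => ∑ k, U k t with hsdef
    -- choose coefficients a, b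
    obtain ⟨a, b, hab, habs⟩ : ∃ a b : ℝ, 0 < a^2 * hHerm.eigenvalues i + b^2 * hHerm.eigenvalues j
        ∧ a * s i + b * s j = 0 := by
      by_cases hsi : s i = 0
      · exact ⟨1, 0, by nlinarith, by rw [hsi]; ring⟩
      · refine ⟨s j, -(s i), ?_, by ring⟩
        have h1 : 0 < (s i)^2 * hHerm.eigenvalues j := by positivity
        have h2 : 0 ≤ (s j)^2 * hHerm.eigenvalues i := by positivity
        nlinarith
    set c : Fin m → ℝ := fun t => if t = i then a else if t = j then b else 0 with hcdef
    have hcz : ∀ t, t ∉ ({i, j} : Finset (Fin m)) → c t = 0 := by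
      intro t ht
      simp only [Finset.mem_insert, Finset.mem_singleton, not_or] at ht
      simp [hcdef, ht.1, ht.2]
    have hpair : ∀ f : Fin m → ℝ, (∀ t, t ∉ ({i, j} : Finset (Fin m)) → f t = 0) →
        (∑ t, f t) = f i + f j := by
      intro f hf
      rw [← Finset.sum_subset (Finset.subset_univ ({i, j} : Finset (Fin m)))
        (fun t _ ht => hf t ht), Finset.sum_pair hij]
    have hci : c i = a := by simp [hcdef]
    have hcj : c j = b := by simp [hcdef, hij, Ne.symm hij]
    have hsum0 : (∑ k, (U *ᵥ c) k) = 0 := by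
      rw [hsum c, hpair _ (fun t ht => by rw [hcz t ht, zero_mul]), hci, hcj, ← habs]
    have hq : dotProduct (U *ᵥ c) (C *ᵥ (U *ᵥ c))
        = a^2 * hHerm.eigenvalues i + b^2 * hHerm.eigenvalues j := by
      rw [hquad c, hpair _ (fun t ht => by rw [hcz t ht]; ring), hci, hcj]
      ring
    have hle := stmt4_quad_nonpos m hm hm' C hC (U *ᵥ c) hsum0
    rw [hq] at hle
    linarith
  obtain ⟨i0, hi0⟩ := hex
  have : (Finset.univ.filter fun i => 0 < hHerm.eigenvalues i) = {i0} := by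
    apply Finset.eq_singleton_iff_unique_mem.mpr
    refine ⟨Finset.mem_filter.mpr ⟨Finset.mem_univ _, hi0⟩, fun j hj => ?_⟩
    exact huniq j i0 (Finset.mem_filter.mp hj).2 hi0
  rw [this, Finset.card_singleton]
end
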